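/- Let d ∈ ℕ, let x : ℝ → ℝ^d be twice continuously differentiable and let U : ℝ^d → ℝ be twice continuously differentiable. Suppose: (i) sup_{t∈ℝ} U(x(t)) < ∞; (ii) r₀ := sup_{t∈ℝ} ‖∇U(x(t))‖ satisfies 0 < r₀ < ∞; (iii) r₂ := sup_{t∈ℝ} ‖ẍ(t)‖ < ∞; and (iv) there is λ > 0 such that for every t ∈ ℝ and every ξ ∈ ℝ^d, ⟨Hess U(x(t)) ξ, ξ⟩ ≥ λ‖ξ‖². Then sup_{t∈ℝ} ‖ẋ(t)‖² ≤ (C²/λ)·r₀·r₂, where C = 2·cos(π/9) is the positive root of ζ³ − 3ζ − 1 = 0. -/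

import Mathlib

open Real Set Filter Topology

/-- Once a differentiable function with positive derivative above a level reaches that level,
it stays at or above it. -/
lemma stay_above (h : ℝ → ℝ) (hd : Differentiable ℝ h) (c ε : ℝ) (hε : 0 < ε)
    (key : ∀ t, c ≤ h t → ε ≤ deriv h t) (t₀ : ℝ) (ht₀ : c ≤ h t₀) :
    ∀ t, t₀ ≤ t → c ≤ h t := by
  by_contra hcon
  push_neg at hcon
  obtain ⟨T, hT₀, hTlt⟩ := hcon
  set A : Set ℝ := {t | t ∈ Set.Ioc t₀ T ∧ h t < c} with hA
  have hTA : T ∈ A := by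
    refine ⟨⟨lt_of_le_of_ne hT₀ ?_, le_rfl⟩, hTlt⟩
    rintro rfl; exact absurd ht₀ (not_le.2 hTlt)
  have hAne : A.Nonempty := ⟨T, hTA⟩
  have hAbdd : BddBelow A := ⟨t₀, fun t ht => ht.1.1.le⟩
  set T₁ := sInf A with hT₁
  have hT₁le : ∀ t ∈ A, T₁ ≤ t := fun t ht => csInf_le hAbdd ht
  have hT₁ge : t₀ ≤ T₁ := le_csInf hAne fun t ht => ht.1.1.le
  have hT₁T : T₁ ≤ T := csInf_le hAbdd hTA
  have hleft : ∀ t, t₀ ≤ t → t < T₁ → c ≤ h t := by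
    intro t ht₀' htT₁
    rcases eq_or_lt_of_le ht₀' with rfl | hlt
    · exact ht₀
    · by_contra hc
      push_neg at hc
      exact absurd (hT₁le t ⟨⟨hlt, htT₁.le.trans hT₁T⟩, hc⟩) (not_le.2 htT₁)
  have hcT₁ : c ≤ h T₁ := by
    rcases eq_or_lt_of_le hT₁ge with heq | hlt
    · rw [← heq]; exact ht₀
    · have htend : Tendsto h (𝓝[<] T₁) (𝓝 (h T₁)) :=
        (hd.continuous.tendsto T₁).mono_left nhdsWithin_le_nhds
      refine ge_of_tendsto htend ?_
      filter_upwards [Ioo_mem_nhdsLT_of_mem (by exact ⟨hlt, le_rfl⟩ : T₁ ∈ Set.Ioc t₀ T₁)]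
        with t ht
      exact hleft t ht.1.le ht.2
  have hT₁notA : T₁ ∉ A := fun hmem => absurd hmem.2 (not_lt.2 hcT₁)
  have hder : 0 < deriv h T₁ := lt_of_lt_of_le hε (key T₁ hcT₁)
  have hslope : Tendsto (slope h T₁) (𝓝[≠] T₁) (𝓝 (deriv h T₁)) :=
    hasDerivAt_iff_tendsto_slope.1 (hd T₁).hasDerivAt
  have hslope' : ∀ᶠ t in 𝓝[>] T₁, 0 < slope h T₁ t := by
    have := hslope.eventually (eventually_gt_nhds hder)
    exact this.filter_mono (nhdsWithin_mono _ (fun t ht => ne_of_gt ht))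
  have hright : {t | c ≤ h t} ∈ 𝓝[>] T₁ := by
    have hev : ∀ᶠ t in 𝓝[>] T₁, c ≤ h t := by
      filter_upwards [hslope', self_mem_nhdsWithin] with t ht hmem
      have htT₁ : (0:ℝ) < t - T₁ := sub_pos.2 hmem
      have hpos : 0 < (h t - h T₁) / (t - T₁) := by rwa [slope_def_field] at ht
      have hx : 0 < h t - h T₁ := by
        rcases div_pos_iff.mp hpos with ⟨h1, _⟩ | ⟨_, h2⟩
        · exact h1
        · linarith
      linarith
    exact hev
  obtain ⟨u, hu, hsub⟩ := mem_nhdsGT_iff_exists_Ioo_subset.1 hright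
  have hcontr : u ≤ T₁ := by
    have h1 : u ≤ sInf A := le_csInf hAne (fun t ht => by
      have ht1 : T₁ < t := lt_of_le_of_ne (hT₁le t ht) (fun he => hT₁notA (he ▸ ht))
      by_contra hul
      push_neg at hul
      exact absurd (hsub ⟨ht1, hul⟩) (not_le.2 ht.2))
    exact h1.trans hT₁.ge
  exact absurd hu (not_lt.2 hcontr)

/-- Riccati-type global bound: if `deriv h ≥ a h² - b` everywhere then `h ≤ √(b/a)`. -/
lemma riccati_bound (h : ℝ → ℝ) (hd : Differentiable ℝ h) (a b : ℝ) (ha : 0 < a) (hb : 0 < b)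
    (key : ∀ t, a * (h t)^2 - b ≤ deriv h t) (t₂ : ℝ) : h t₂ ≤ Real.sqrt (b / a) := by
  by_contra hlt
  push_neg at hlt
  set K := Real.sqrt (b / a) with hK
  have hKpos : 0 < K := Real.sqrt_pos.2 (div_pos hb ha)
  have hK2 : K ^ 2 = b / a := Real.sq_sqrt (div_pos hb ha).le
  set c := h t₂ with hc
  have hcK : K < c := hlt
  have hcpos : 0 < c := hKpos.trans hcK
  -- stay above level c for t ≥ t₂
  have hstay : ∀ t, t₂ ≤ t → c ≤ h t := by
    refine stay_above h hd c (a * (c^2 - K^2)) ?_ ?_ t₂ le_rfl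
    · have h1 : 0 < c^2 - K^2 := by nlinarith
      positivity
    · intro t hct
      have h1 := key t
      have h2 : c^2 ≤ (h t)^2 := by nlinarith
      have : a * K ^ 2 = b := by rw [hK2]; field_simp
      nlinarith
  -- on [t₂, ∞), deriv h ≥ ε h² with ε = a(1 - K²/c²)
  set ε := a * (1 - K^2 / c^2) with hε
  have hεpos : 0 < ε := by
    have : K^2 / c^2 < 1 := by
      rw [div_lt_one (by positivity)]
      nlinarith
    have := sub_pos.2 this
    positivity
  have hkey2 : ∀ t, t₂ ≤ t → ε * (h t)^2 ≤ deriv h t := by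
    intro t ht
    have hct := hstay t ht
    have h2 : c^2 ≤ (h t)^2 := by nlinarith
    have haK : a * K ^ 2 = b := by rw [hK2]; field_simp
    have : ε * (h t)^2 = a * (h t)^2 - a * (K^2/c^2) * (h t)^2 := by ring
    have hdiv : a * K^2 ≤ a * (K^2/c^2) * (h t)^2 := by
      have h3 : K^2 ≤ K^2 / c^2 * (h t)^2 := by
        rw [div_mul_eq_mul_div, le_div_iff₀ (by positivity : (0:ℝ) < c^2)]
        nlinarith [sq_nonneg K]
      nlinarith [mul_le_mul_of_nonneg_left h3 ha.le]
    nlinarith [key t]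
  -- F = 1/h + ε t is antitone on [t₂, ∞)
  set F : ℝ → ℝ := fun t => (h t)⁻¹ + ε * t with hF
  have hpos : ∀ t, t₂ ≤ t → 0 < h t := fun t ht => hcpos.trans_le (hstay t ht)
  have hanti : AntitoneOn F (Set.Ici t₂) := by
    apply antitoneOn_of_deriv_nonpos (convex_Ici t₂)
    · apply ContinuousOn.add
      · exact (hd.continuous.continuousOn).inv₀ (fun t ht => (hpos t ht).ne')
      · exact (continuous_const.mul continuous_id).continuousOn
    · intro t ht
      rw [interior_Ici] at ht
      have hne : h t ≠ 0 := (hpos t (le_of_lt ht)).ne'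
      exact (((hd t).inv hne).add ((differentiableAt_const _).mul differentiableAt_fun_id)).differentiableWithinAt
    · intro t ht
      rw [interior_Ici] at ht
      have ht' : t₂ ≤ t := le_of_lt ht
      have hne : h t ≠ 0 := (hpos t ht').ne'
      have hder : HasDerivAt F (-deriv h t / (h t)^2 + ε) t := by
        have h1 : HasDerivAt (fun t => (h t)⁻¹) (-deriv h t / (h t)^2) t :=
          (hd t).hasDerivAt.inv hne
        have h2 : HasDerivAt (fun t => ε * t) ε t := by
          simpa using (hasDerivAt_id t).const_mul ε
        exact h1.add h2
      rw [hder.deriv]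
      have := hkey2 t ht'
      rw [neg_div, neg_add_le_iff_le_add, add_zero, le_div_iff₀ (by positivity)]
      linarith [hkey2 t ht']
  -- contradiction at large time
  have hpos13 : 0 < 1/(ε*c) := by positivity
  set t₃ : ℝ := t₂ + 1/(ε * c) + 1 with ht₃
  have ht₃mem : t₂ ≤ t₃ := by rw [ht₃]; linarith
  have := hanti (Set.self_mem_Ici) ht₃mem ht₃mem
  have hinv3 : 0 < (h t₃)⁻¹ := inv_pos.2 (hpos t₃ ht₃mem)
  have hFle : (h t₃)⁻¹ + ε * t₃ ≤ c⁻¹ + ε * t₂ := by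
    simpa [F, hc] using this
  have hεc : ε * (1/(ε*c)) = 1/c := by field_simp
  have hic : c⁻¹ = 1/c := (one_div c).symm
  nlinarith [hFle, hinv3, hεpos, hεc]

lemma cubic_root_bound (u : ℝ) (hu : 0 ≤ u) (h : u^3 ≤ 3*u + 1) : u ≤ 2 * Real.cos (π/9) := by
  set C := 2 * Real.cos (π/9) with hC
  have hcos : Real.cos (π/3) = 4 * Real.cos (π/9) ^ 3 - 3 * Real.cos (π/9) := by
    have := Real.cos_three_mul (π/9)
    rw [show 3 * (π/9) = π/3 by ring] at this
    exact this
  have hC3 : C^3 = 3*C + 1 := by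
    rw [hC]
    have h13 : Real.cos (π/3) = 1/2 := Real.cos_pi_div_three
    nlinarith [hcos]
  have hC1 : 1 < C := by
    have : Real.cos (π/3) < Real.cos (π/9) := by
      apply Real.cos_lt_cos_of_nonneg_of_le_pi (by positivity) (by linarith [Real.pi_pos])
      linarith [Real.pi_pos]
    rw [Real.cos_pi_div_three] at this
    rw [hC]; linarith
  by_contra hlt
  push_neg at hlt
  have hfac : 0 < u^2 + u*C + C^2 - 3 := by nlinarith [hC1, hlt]
  nlinarith [hC3, mul_pos (sub_pos.2 hlt) hfac]

set_option maxHeartbeats 1000000 in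
lemma main_aux (d : ℕ) (x : ℝ → EuclideanSpace ℝ (Fin d)) (U : EuclideanSpace ℝ (Fin d) → ℝ)
    (hx : ContDiff ℝ 2 x) (hU : ContDiff ℝ 2 U)
    (r₀ R₂ lam : ℝ) (hr₀pos : 0 < r₀) (hR₂pos : 0 < R₂) (hlam : 0 < lam)
    (hgrad : ∀ t, ‖gradient U (x t)‖ ≤ r₀)
    (hacc : ∀ t, ‖deriv (deriv x) t‖ ≤ R₂)
    (hHess : ∀ t : ℝ, ∀ ξ : EuclideanSpace ℝ (Fin d),
      lam * ‖ξ‖ ^ 2 ≤ iteratedFDeriv ℝ 2 U (x t) ![ξ, ξ])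
    (t₀ : ℝ) :
    ‖deriv x t₀‖ ≤ (2 * Real.cos (π/9)) * Real.sqrt (r₀ * R₂ / lam) := by
  have hxd : Differentiable ℝ x := hx.differentiable (by norm_num)
  have hx1 : ContDiff ℝ 1 (deriv x) := by
    have h21 : ContDiff ℝ ((1:ℕ) + 1) x := by exact_mod_cast hx
    exact (contDiff_succ_iff_deriv.mp h21).2.2
  have hdx : Differentiable ℝ (deriv x) := hx1.differentiable (by norm_num)
  have hU1 : ContDiff ℝ 1 (fderiv ℝ U) := hU.fderiv_right (by norm_num)
  have hUd : Differentiable ℝ (fderiv ℝ U) := hU1.differentiable (by norm_num)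
  have hfd_norm : ∀ p, ‖fderiv ℝ U p‖ = ‖gradient U p‖ := by
    intro p
    simp only [gradient, LinearIsometryEquiv.norm_map]
  set h : ℝ → ℝ := fun t => fderiv ℝ U (x t) (deriv x t) with hh
  have hder : ∀ t, HasDerivAt h
      (iteratedFDeriv ℝ 2 U (x t) ![deriv x t, deriv x t]
        + fderiv ℝ U (x t) (deriv (deriv x) t)) t := by
    intro t
    have hc : HasDerivAt (fun s => fderiv ℝ U (x s))
        (fderiv ℝ (fderiv ℝ U) (x t) (deriv x t)) t :=
      (hUd (x t)).hasFDerivAt.comp_hasDerivAt t (hxd t).hasDerivAt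
    have hu : HasDerivAt (deriv x) (deriv (deriv x) t) t := (hdx t).hasDerivAt
    have hca := hc.clm_apply hu
    have h2 : iteratedFDeriv ℝ 2 U (x t) ![deriv x t, deriv x t]
        = fderiv ℝ (fderiv ℝ U) (x t) (deriv x t) (deriv x t) := by
      rw [iteratedFDeriv_two_apply]; simp
    rw [h2]
    exact hca
  have hdh : Differentiable ℝ h := fun t => (hder t).differentiableAt
  have hderiv_h : ∀ t, lam * ‖deriv x t‖^2 - r₀ * R₂ ≤ deriv h t := by
    intro t
    rw [(hder t).deriv]
    have h1 := hHess t (deriv x t)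
    have h2 : |fderiv ℝ U (x t) (deriv (deriv x) t)| ≤ r₀ * R₂ := by
      rw [← Real.norm_eq_abs]
      calc ‖fderiv ℝ U (x t) (deriv (deriv x) t)‖
          ≤ ‖fderiv ℝ U (x t)‖ * ‖deriv (deriv x) t‖ :=
            (fderiv ℝ U (x t)).le_opNorm _
        _ ≤ r₀ * R₂ := by
            apply mul_le_mul _ (hacc t) (norm_nonneg _) hr₀pos.le
            rw [hfd_norm]; exact hgrad t
    have h3 := (abs_le.mp h2).1
    linarith
  have habs : ∀ t, |h t| ≤ r₀ * ‖deriv x t‖ := by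
    intro t
    rw [← Real.norm_eq_abs]
    calc ‖fderiv ℝ U (x t) (deriv x t)‖
        ≤ ‖fderiv ℝ U (x t)‖ * ‖deriv x t‖ := (fderiv ℝ U (x t)).le_opNorm _
      _ ≤ r₀ * ‖deriv x t‖ := by
          apply mul_le_mul_of_nonneg_right _ (norm_nonneg _)
          rw [hfd_norm]; exact hgrad t
  set a := lam / r₀^2 with ha
  set b := r₀ * R₂ with hb
  have hapos : 0 < a := by positivity
  have hbpos : 0 < b := by positivity
  have hkey : ∀ t, a * (h t)^2 - b ≤ deriv h t := by
    intro t
    have h1 := habs t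
    have h2 : (h t)^2 ≤ r₀^2 * ‖deriv x t‖^2 := by
      nlinarith [abs_nonneg (h t), norm_nonneg (deriv x t), sq_abs (h t)]
    have h3 : a * (h t)^2 ≤ lam * ‖deriv x t‖^2 := by
      calc a * (h t)^2 ≤ a * (r₀^2 * ‖deriv x t‖^2) :=
            mul_le_mul_of_nonneg_left h2 hapos.le
        _ = lam * ‖deriv x t‖^2 := by rw [ha]; field_simp
    linarith [hderiv_h t]
  have hub : ∀ t, h t ≤ Real.sqrt (b/a) := fun t => riccati_bound h hdh a b hapos hbpos hkey t
  have hlb : ∀ t, -Real.sqrt (b/a) ≤ h t := by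
    intro t
    set g : ℝ → ℝ := fun u => -h (-u) with hg
    have hdg : ∀ u, HasDerivAt g (deriv h (-u)) u := by
      intro u
      have h1 : HasDerivAt (fun w => h (-w)) (deriv h (-u) * (-1)) u :=
        HasDerivAt.comp u (hdh (-u)).hasDerivAt (hasDerivAt_neg u)
      have h2 := h1.neg
      exact h2.congr_deriv (by ring)
    have hgkey : ∀ u, a * (g u)^2 - b ≤ deriv g u := by
      intro u
      rw [(hdg u).deriv]
      have := hkey (-u)
      have hgu : (g u)^2 = (h (-u))^2 := by rw [hg]; ring
      rw [hgu]
      exact this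
    have := riccati_bound g (fun u => (hdg u).differentiableAt) a b hapos hbpos hgkey (-t)
    have hgt : g (-t) = -h t := by rw [hg]; simp
    rw [hgt] at this
    linarith
  set s₀ := Real.sqrt (r₀ * R₂ / lam) with hs₀
  have hs₀pos : 0 < s₀ := Real.sqrt_pos.2 (by positivity)
  have hs₀sq : s₀^2 = r₀ * R₂ / lam := Real.sq_sqrt (by positivity)
  have hba : Real.sqrt (b/a) = r₀ * s₀ := by
    have he : (r₀*s₀)^2 = b/a := by
      rw [mul_pow, hs₀sq, ha, hb]; field_simp
    rw [← he, Real.sqrt_sq (by positivity)]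
  set s := ‖deriv x t₀‖ with hs
  set C := 2 * Real.cos (π/9) with hC
  have hC1 : 1 ≤ C := by
    have hlt : Real.cos (π/3) < Real.cos (π/9) := by
      apply Real.cos_lt_cos_of_nonneg_of_le_pi (by positivity) (by linarith [Real.pi_pos])
      linarith [Real.pi_pos]
    rw [Real.cos_pi_div_three] at hlt
    rw [hC]; linarith
  by_cases hcase : s ≤ s₀
  · calc s ≤ s₀ := hcase
      _ ≤ C * s₀ := le_mul_of_one_le_left hs₀pos.le hC1
  · push_neg at hcase
    set aw := (s - s₀)/R₂ with haw
    have hawpos : 0 < aw := div_pos (by linarith) hR₂pos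
    have hawR : R₂ * aw = s - s₀ := by rw [haw]; field_simp
    have hv : ∀ t, s - R₂ * |t - t₀| ≤ ‖deriv x t‖ := by
      intro t
      have hlip : ‖deriv x t - deriv x t₀‖ ≤ R₂ * ‖t - t₀‖ :=
        Convex.norm_image_sub_le_of_norm_deriv_le (fun y _ => hdx y) (fun y _ => hacc y)
          convex_univ (Set.mem_univ t₀) (Set.mem_univ t)
      rw [Real.norm_eq_abs] at hlip
      have h2 := norm_sub_norm_le (deriv x t₀) (deriv x t)
      rw [norm_sub_rev] at h2
      rw [hs]
      linarith
    -- forward window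
    set q₁ : ℝ → ℝ := fun t => s - R₂ * (t - t₀) with hq₁
    set G₁ : ℝ → ℝ := fun t => h t + (q₁ t)^3 * (lam/(3*R₂)) + (t - t₀) * (r₀*R₂) with hG₁
    have hq₁d : ∀ t, HasDerivAt q₁ (-R₂) t := by
      intro t
      have h1 := (((hasDerivAt_id t).sub_const t₀).const_mul R₂).const_sub s
      simpa using h1
    have hG₁d : ∀ t, HasDerivAt G₁ (deriv h t - lam * (q₁ t)^2 + r₀*R₂) t := by
      intro t
      have h1 := ((hq₁d t).pow 3).mul_const (lam/(3*R₂))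
      have h2 := ((hasDerivAt_id t).sub_const t₀).mul_const (r₀*R₂)
      have h3 := ((hdh t).hasDerivAt.add h1).add h2
      convert h3 using 1
      · rfl
      · rfl
      · rfl
      have hRne : (R₂:ℝ) ≠ 0 := ne_of_gt hR₂pos
      field_simp
      ring
    have hG₁diff : Differentiable ℝ G₁ := fun t => (hG₁d t).differentiableAt
    have hmono1 : MonotoneOn G₁ (Set.Icc t₀ (t₀ + aw)) := by
      apply monotoneOn_of_deriv_nonneg (convex_Icc _ _)
        hG₁diff.continuous.continuousOn (hG₁diff.differentiableOn)
      intro t ht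
      rw [interior_Icc] at ht
      rw [(hG₁d t).deriv]
      have habs' : |t - t₀| = t - t₀ := abs_of_nonneg (by linarith [ht.1])
      have hq_pos : s₀ ≤ q₁ t := by
        rw [hq₁]
        simp only
        nlinarith [ht.2, hR₂pos, hawR]
      have hq_le_v : q₁ t ≤ ‖deriv x t‖ := by
        have h1 := hv t
        rw [habs'] at h1
        rw [hq₁]
        exact h1
      have hq_nonneg : 0 ≤ q₁ t := le_trans hs₀pos.le hq_pos
      have hsq : (q₁ t)^2 ≤ ‖deriv x t‖^2 := by nlinarith
      have h1 := hderiv_h t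
      nlinarith [mul_le_mul_of_nonneg_left hsq hlam.le]
    have hineq1 : (s^3 - s₀^3) * (lam/(3*R₂)) - aw*(r₀*R₂) ≤ h (t₀+aw) - h t₀ := by
      have hm := hmono1 (Set.left_mem_Icc.2 (by linarith)) (Set.right_mem_Icc.2 (by linarith))
        (by linarith)
      have eg : G₁ t₀ = h t₀ + s^3 * (lam/(3*R₂)) := by
        rw [hG₁]; simp [hq₁]
      have eg2 : G₁ (t₀+aw) = h (t₀+aw) + s₀^3*(lam/(3*R₂)) + aw*(r₀*R₂) := by
        rw [hG₁]
        simp only [hq₁]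
        rw [show t₀ + aw - t₀ = aw by ring, show s - R₂ * aw = s₀ by linarith [hawR]]
      rw [eg, eg2] at hm
      linarith
    -- backward window
    set q₂ : ℝ → ℝ := fun t => s - R₂ * (t₀ - t) with hq₂
    set G₂ : ℝ → ℝ := fun t => h t - (q₂ t)^3 * (lam/(3*R₂)) + (t - t₀) * (r₀*R₂) with hG₂
    have hq₂d : ∀ t, HasDerivAt q₂ R₂ t := by
      intro t
      have h1 := (((hasDerivAt_id t).const_sub t₀).const_mul R₂).const_sub s
      simpa using h1
    have hG₂d : ∀ t, HasDerivAt G₂ (deriv h t - lam * (q₂ t)^2 + r₀*R₂) t := by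
      intro t
      have h1 := ((hq₂d t).pow 3).mul_const (lam/(3*R₂))
      have h2 := ((hasDerivAt_id t).sub_const t₀).mul_const (r₀*R₂)
      have h3 := ((hdh t).hasDerivAt.sub h1).add h2
      convert h3 using 1
      · rfl
      · rfl
      · rfl
      have hRne : (R₂:ℝ) ≠ 0 := ne_of_gt hR₂pos
      field_simp
      ring
    have hG₂diff : Differentiable ℝ G₂ := fun t => (hG₂d t).differentiableAt
    have hmono2 : MonotoneOn G₂ (Set.Icc (t₀ - aw) t₀) := by
      apply monotoneOn_of_deriv_nonneg (convex_Icc _ _)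
        hG₂diff.continuous.continuousOn (hG₂diff.differentiableOn)
      intro t ht
      rw [interior_Icc] at ht
      rw [(hG₂d t).deriv]
      have habs' : |t - t₀| = t₀ - t := by
        rw [abs_sub_comm]; exact abs_of_nonneg (by linarith [ht.2])
      have hq_pos : s₀ ≤ q₂ t := by
        rw [hq₂]
        simp only
        nlinarith [ht.1, hR₂pos, hawR]
      have hq_le_v : q₂ t ≤ ‖deriv x t‖ := by
        have h1 := hv t
        rw [habs'] at h1
        rw [hq₂]
        exact h1
      have hq_nonneg : 0 ≤ q₂ t := le_trans hs₀pos.le hq_pos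
      have hsq : (q₂ t)^2 ≤ ‖deriv x t‖^2 := by nlinarith
      have h1 := hderiv_h t
      nlinarith [mul_le_mul_of_nonneg_left hsq hlam.le]
    have hineq2 : (s^3 - s₀^3) * (lam/(3*R₂)) - aw*(r₀*R₂) ≤ h t₀ - h (t₀-aw) := by
      have hm := hmono2 (Set.left_mem_Icc.2 (by linarith)) (Set.right_mem_Icc.2 (by linarith))
        (by linarith)
      have eg : G₂ t₀ = h t₀ - s^3 * (lam/(3*R₂)) := by
        rw [hG₂]; simp [hq₂]
      have eg2 : G₂ (t₀-aw) = h (t₀-aw) - s₀^3*(lam/(3*R₂)) - aw*(r₀*R₂) := by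
        rw [hG₂]
        simp only [hq₂]
        rw [show t₀ - (t₀ - aw) = aw by ring, show s - R₂ * aw = s₀ by linarith [hawR],
          show t₀ - aw - t₀ = -aw by ring]
        ring
      rw [eg, eg2] at hm
      linarith
    -- combine
    have hu1 := hub (t₀+aw); rw [hba] at hu1
    have hl1 := hlb (t₀-aw); rw [hba] at hl1
    have hfin : (s^3 - s₀^3) * (lam/(3*R₂)) - aw*(r₀*R₂) ≤ r₀ * s₀ := by linarith
    have haw' : aw*(r₀*R₂) = (s-s₀)*r₀ := by rw [haw]; field_simp
    have h1 : lam * (s^3 - s₀^3) ≤ 3*R₂*r₀*s := by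
      rw [haw'] at hfin
      have h3R : (0:ℝ) < 3*R₂ := by linarith
      rw [mul_div_assoc'] at hfin
      have hfin' := (div_le_iff₀ h3R).mp (by linarith : (s^3 - s₀^3) * lam / (3*R₂) ≤ r₀*s₀ + (s-s₀)*r₀)
      nlinarith [hfin']
    have h2 : lam * s₀^2 = r₀ * R₂ := by rw [hs₀sq]; field_simp
    have hs3 : s^3 ≤ 3*(s₀^2)*s + s₀^3 := by
      have h2s : lam * s₀^2 * s = r₀ * R₂ * s := by rw [h2]
      nlinarith [h1, h2s, hlam]
    have hcube : (s/s₀)^3 ≤ 3*(s/s₀) + 1 := by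
      rw [div_pow, div_le_iff₀ (by positivity : (0:ℝ) < s₀^3)]
      have he : (3*(s/s₀) + 1) * s₀^3 = 3*s₀^2*s + s₀^3 := by field_simp
      rw [he]
      linarith [hs3]
    have hfin2 := cubic_root_bound (s/s₀) (by positivity) hcube
    rw [← hC] at hfin2
    calc s = (s/s₀) * s₀ := by field_simp
      _ ≤ C * s₀ := mul_le_mul_of_nonneg_right hfin2 hs₀pos.le

/-- Landau–Hadamard type inequality in `ℝ^d` (Theorem 1 of the paper, flat case):
if `U∘x` is bounded above, `r₀ = sup ‖∇U(x(t))‖ ∈ (0,∞)`, `r₂ = sup ‖ẍ(t)‖ < ∞`, and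
the Hessian of `U` along the curve is uniformly positive definite with constant `λ > 0`,
then `sup ‖ẋ(t)‖² ≤ (C²/λ)·r₀·r₂`, where `C = 2cos(π/9)` is the positive root of
`ζ³ − 3ζ − 1 = 0`. -/
theorem landau_hadamard_euclidean (d : ℕ)
    (x : ℝ → EuclideanSpace ℝ (Fin d)) (U : EuclideanSpace ℝ (Fin d) → ℝ)
    (hx : ContDiff ℝ 2 x) (hU : ContDiff ℝ 2 U)
    (hUbdd : BddAbove (Set.range fun t => U (x t)))
    (r₀ : ℝ) (hr₀ : r₀ = ⨆ t : ℝ, ‖gradient U (x t)‖)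
    (hr₀bdd : BddAbove (Set.range fun t => ‖gradient U (x t)‖)) (hr₀pos : 0 < r₀)
    (r₂ : ℝ) (hr₂ : r₂ = ⨆ t : ℝ, ‖deriv (deriv x) t‖)
    (hr₂bdd : BddAbove (Set.range fun t => ‖deriv (deriv x) t‖))
    (lam : ℝ) (hlam : 0 < lam)
    (hHess : ∀ t : ℝ, ∀ ξ : EuclideanSpace ℝ (Fin d),
      lam * ‖ξ‖ ^ 2 ≤ iteratedFDeriv ℝ 2 U (x t) ![ξ, ξ]) :
    ∀ t : ℝ, ‖deriv x t‖ ^ 2 ≤ ((2 * Real.cos (Real.pi / 9)) ^ 2 / lam) * r₀ * r₂ := by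
  intro t
  set C := 2 * Real.cos (Real.pi / 9) with hC
  have hCpos : 0 < C := by
    have h9 : 0 < Real.cos (Real.pi/9) := by
      apply Real.cos_pos_of_mem_Ioo
      constructor
      · nlinarith [Real.pi_pos]
      · nlinarith [Real.pi_pos]
    rw [hC]; positivity
  have hgrad : ∀ u, ‖gradient U (x u)‖ ≤ r₀ := fun u => hr₀ ▸ le_ciSup hr₀bdd u
  have hacc : ∀ u, ‖deriv (deriv x) u‖ ≤ r₂ := fun u => hr₂ ▸ le_ciSup hr₂bdd u
  have hr₂0 : 0 ≤ r₂ := (norm_nonneg _).trans (hacc 0)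
  have key : ∀ ε > 0, ‖deriv x t‖^2 ≤ C^2/lam * r₀ * r₂ + (C^2/lam*r₀) * ε := by
    intro ε hε
    have hR : 0 < r₂ + ε := by linarith
    have haux := main_aux d x U hx hU r₀ (r₂+ε) lam hr₀pos hR hlam hgrad
      (fun u => (hacc u).trans (by linarith)) hHess t
    have h1 : ‖deriv x t‖^2 ≤ (C * Real.sqrt (r₀*(r₂+ε)/lam))^2 :=
      pow_le_pow_left₀ (norm_nonneg _) haux 2
    have h2 : (C * Real.sqrt (r₀*(r₂+ε)/lam))^2 = C^2 * (r₀*(r₂+ε)/lam) := by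
      rw [mul_pow, Real.sq_sqrt (by positivity)]
    rw [h2] at h1
    calc ‖deriv x t‖^2 ≤ C^2 * (r₀*(r₂+ε)/lam) := h1
      _ = C^2/lam * r₀ * r₂ + (C^2/lam*r₀) * ε := by field_simp
  have hmain : ‖deriv x t‖^2 ≤ C^2/lam * r₀ * r₂ := by
    apply le_of_forall_pos_le_add
    intro δ hδ
    have hKpos : 0 < C^2/lam * r₀ := by positivity
    have hk := key (δ / (C^2/lam*r₀)) (by positivity)
    have heq : (C^2/lam*r₀) * (δ / (C^2/lam*r₀)) = δ := by field_simp
    rw [heq] at hk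
    exact hk
  calc ‖deriv x t‖^2 ≤ C^2/lam * r₀ * r₂ := hmain
    _ = C^2/lam * r₀ * r₂ := rfl
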